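/- Let M and M' be two m-player finite-horizon Markov game models on the same finite state space S, finite joint action space A = A_1 × ⋯ × A_m, and horizon H, with mean rewards in [0,1]. If a joint Markov policy π satisfies CCEGap^M(π) ≤ ε, then CCEGap^{M'}(π) ≤ ε + 2H‖M − M'‖₁. -/
import Mathlib


open Finset

/-- Value function of a joint Markov policy `π` in a finite-horizon Markov game / MDP with
horizon `H`, transitions `P` and mean rewards `R` (for one fixed player), written in terms of
the number `k` of remaining steps: `gval H P R π k s = V_{H+1-k}(s)`; with `k+1` steps
remaining, the current step is `h = H - k`. The value of the game from the initial state `s₁`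
is `gval H P R π H s₁`. -/
noncomputable def gval {S J : Type*} [Fintype S] [Fintype J] (H : ℕ)
    (P : ℕ → S → J → S → ℝ) (R : ℕ → S → J → ℝ) (π : ℕ → S → J → ℝ) : ℕ → S → ℝ
  | 0, _ => 0
  | k + 1, s => ∑ a, π (H - k) s a *
      (R (H - k) s a + ∑ s', P (H - k) s a s' * gval H P R π k s')

/-- The joint policy `(σ, π_{-i})`: player `i` plays `a_i ∼ σ_h(·|s)` independently, while the
other players play `a_{-i}` drawn from the marginal of the joint policy `π_h(·|s)` on `A_{-i}`. -/
noncomputable def deviate {m : ℕ} {S : Type*} {A : Fin m → Type*} [∀ i, Fintype (A i)]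
    (π : ℕ → S → ((j : Fin m) → A j) → ℝ) (i : Fin m) (σ : ℕ → S → A i → ℝ) :
    ℕ → S → ((j : Fin m) → A j) → ℝ :=
  fun h s a => σ h s (a i) * ∑ b : A i, π h s (Function.update a i b)

section auxiliary

variable {S J : Type*} [Fintype S] [Fintype J]

/-- For a valid policy and rewards in `[0,1]`, the value with `k` remaining steps lies in
`[0, k]`. -/
lemma gval_mem_Icc (H : ℕ) (P : ℕ → S → J → S → ℝ) (R : ℕ → S → J → ℝ)
    (ρ : ℕ → S → J → ℝ)
    (hP0 : ∀ h s a s', 0 ≤ P h s a s') (hP1 : ∀ h s a, ∑ s', P h s a s' = 1)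
    (hR : ∀ h s a, R h s a ∈ Set.Icc (0:ℝ) 1)
    (hρ0 : ∀ h s a, 0 ≤ ρ h s a) (hρ1 : ∀ h s, ∑ a, ρ h s a = 1) :
    ∀ (k : ℕ) (s : S), gval H P R ρ k s ∈ Set.Icc (0:ℝ) (k:ℝ) := by
  intro k
  induction k with
  | zero => intro s; simp [gval]
  | succ k ih =>
    intro s
    constructor
    · simp only [gval]
      refine Finset.sum_nonneg fun a _ => mul_nonneg (hρ0 _ _ _) ?_
      have h1 : (0:ℝ) ≤ ∑ s', P (H-k) s a s' * gval H P R ρ k s' :=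
        Finset.sum_nonneg fun s' _ => mul_nonneg (hP0 _ _ _ _) (ih s').1
      linarith [(hR (H-k) s a).1]
    · simp only [gval]
      have step : ∀ a : J, ρ (H-k) s a * (R (H-k) s a + ∑ s', P (H-k) s a s' * gval H P R ρ k s')
          ≤ ρ (H-k) s a * (1 + k) := by
        intro a
        refine mul_le_mul_of_nonneg_left ?_ (hρ0 _ _ _)
        have h1 : ∑ s', P (H-k) s a s' * gval H P R ρ k s' ≤ ∑ s', P (H-k) s a s' * k :=
          Finset.sum_le_sum fun s' _ => mul_le_mul_of_nonneg_left (ih s').2 (hP0 _ _ _ _)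
        have h2 : ∑ s', P (H-k) s a s' * (k:ℝ) = k := by
          rw [← Finset.sum_mul, hP1, one_mul]
        linarith [(hR (H-k) s a).2]
      calc ∑ a, ρ (H-k) s a * (R (H-k) s a + ∑ s', P (H-k) s a s' * gval H P R ρ k s')
          ≤ ∑ a, ρ (H-k) s a * (1 + k) := Finset.sum_le_sum fun a _ => step a
        _ = 1 + k := by rw [← Finset.sum_mul, hρ1, one_mul]
        _ = ((k+1 : ℕ) : ℝ) := by push_cast; ring

/-- Simulation lemma: the difference of values of the same policy in two models is bounded by
the accumulated reward and (horizon-weighted) transition discrepancies. -/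
lemma gval_diff [Nonempty S] [Nonempty J] (H : ℕ) (P P' : ℕ → S → J → S → ℝ)
    (R R' : ℕ → S → J → ℝ) (ρ : ℕ → S → J → ℝ)
    (hP0 : ∀ h s a s', 0 ≤ P h s a s') (hP1 : ∀ h s a, ∑ s', P h s a s' = 1)
    (hP'0 : ∀ h s a s', 0 ≤ P' h s a s') (hP'1 : ∀ h s a, ∑ s', P' h s a s' = 1)
    (hR : ∀ h s a, R h s a ∈ Set.Icc (0:ℝ) 1)
    (hρ0 : ∀ h s a, 0 ≤ ρ h s a) (hρ1 : ∀ h s, ∑ a, ρ h s a = 1)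
    (dP dR : ℕ → ℝ)
    (hdP : ∀ h s a, ∑ s', |P h s a s' - P' h s a s'| ≤ dP h)
    (hdR : ∀ h s a, |R h s a - R' h s a| ≤ dR h) :
    ∀ k, k ≤ H → ∀ s, |gval H P R ρ k s - gval H P' R' ρ k s|
      ≤ ∑ h ∈ Finset.Icc (H - k + 1) H, (dR h + H * dP h) := by
  intro k
  induction k with
  | zero => intro _ s; simp [gval]
  | succ k ih =>
    intro hk s
    have hk' : k ≤ H := Nat.le_of_succ_le hk
    set h0 := H - k with hh0
    have hins : Finset.Icc (H - (k+1) + 1) H = insert h0 (Finset.Icc (h0 + 1) H) := by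
      ext x; simp only [Finset.mem_Icc, Finset.mem_insert]; omega
    have hnotmem : h0 ∉ Finset.Icc (h0 + 1) H := by
      simp [Finset.mem_Icc]
    set B := ∑ h ∈ Finset.Icc (h0 + 1) H, (dR h + H * dP h) with hB
    have dP0 : 0 ≤ dP h0 :=
      le_trans (Finset.sum_nonneg fun _ _ => abs_nonneg _)
        (hdP h0 (Classical.arbitrary S) (Classical.arbitrary J))
    have hVk : ∀ s', gval H P R ρ k s' ∈ Set.Icc (0:ℝ) (k:ℝ) :=
      gval_mem_Icc H P R ρ hP0 hP1 hR hρ0 hρ1 k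
    have key : ∀ a : J,
        |(R h0 s a + ∑ s', P h0 s a s' * gval H P R ρ k s')
          - (R' h0 s a + ∑ s', P' h0 s a s' * gval H P' R' ρ k s')|
        ≤ dR h0 + H * dP h0 + B := by
      intro a
      have inner : |∑ s', P h0 s a s' * gval H P R ρ k s'
          - ∑ s', P' h0 s a s' * gval H P' R' ρ k s'| ≤ dP h0 * k + B := by
        rw [← Finset.sum_sub_distrib]
        calc |∑ s', (P h0 s a s' * gval H P R ρ k s' - P' h0 s a s' * gval H P' R' ρ k s')|
            ≤ ∑ s', |P h0 s a s' * gval H P R ρ k s' - P' h0 s a s' * gval H P' R' ρ k s'| :=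
              Finset.abs_sum_le_sum_abs _ _
          _ ≤ ∑ s', (|P h0 s a s' - P' h0 s a s'| * k
                + P' h0 s a s' * |gval H P R ρ k s' - gval H P' R' ρ k s'|) := by
              refine Finset.sum_le_sum fun s' _ => ?_
              have e : P h0 s a s' * gval H P R ρ k s' - P' h0 s a s' * gval H P' R' ρ k s'
                  = (P h0 s a s' - P' h0 s a s') * gval H P R ρ k s'
                    + P' h0 s a s' * (gval H P R ρ k s' - gval H P' R' ρ k s') := by ring
              rw [e]
              refine le_trans (abs_add_le _ _) (add_le_add ?_ ?_)
              · rw [abs_mul]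
                refine mul_le_mul_of_nonneg_left ?_ (abs_nonneg _)
                rw [abs_of_nonneg (hVk s').1]; exact (hVk s').2
              · rw [abs_mul, abs_of_nonneg (hP'0 _ _ _ _)]
          _ ≤ dP h0 * k + B := by
              rw [Finset.sum_add_distrib, ← Finset.sum_mul]
              refine add_le_add (mul_le_mul_of_nonneg_right (hdP _ _ _) (Nat.cast_nonneg k)) ?_
              calc ∑ s', P' h0 s a s' * |gval H P R ρ k s' - gval H P' R' ρ k s'|
                  ≤ ∑ s', P' h0 s a s' * B :=
                    Finset.sum_le_sum fun s' _ =>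
                      mul_le_mul_of_nonneg_left (ih hk' s') (hP'0 _ _ _ _)
                _ = B := by rw [← Finset.sum_mul, hP'1, one_mul]
      have hdPk : dP h0 * k ≤ H * dP h0 := by
        rw [mul_comm]
        exact mul_le_mul_of_nonneg_right (by exact_mod_cast hk') dP0
      calc |(R h0 s a + ∑ s', P h0 s a s' * gval H P R ρ k s')
            - (R' h0 s a + ∑ s', P' h0 s a s' * gval H P' R' ρ k s')|
          = |(R h0 s a - R' h0 s a) + (∑ s', P h0 s a s' * gval H P R ρ k s'
              - ∑ s', P' h0 s a s' * gval H P' R' ρ k s')| := by ring_nf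
        _ ≤ |R h0 s a - R' h0 s a| + |∑ s', P h0 s a s' * gval H P R ρ k s'
              - ∑ s', P' h0 s a s' * gval H P' R' ρ k s'| := abs_add_le _ _
        _ ≤ dR h0 + (dP h0 * k + B) := add_le_add (hdR _ _ _) inner
        _ ≤ dR h0 + H * dP h0 + B := by linarith
    have expand : gval H P R ρ (k+1) s - gval H P' R' ρ (k+1) s
        = ∑ a, ρ h0 s a * ((R h0 s a + ∑ s', P h0 s a s' * gval H P R ρ k s')
            - (R' h0 s a + ∑ s', P' h0 s a s' * gval H P' R' ρ k s')) := by
      simp only [gval, ← hh0, ← Finset.sum_sub_distrib, mul_sub]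
    rw [expand, hins, Finset.sum_insert hnotmem, ← hB]
    calc |∑ a, ρ h0 s a * ((R h0 s a + ∑ s', P h0 s a s' * gval H P R ρ k s')
            - (R' h0 s a + ∑ s', P' h0 s a s' * gval H P' R' ρ k s'))|
        ≤ ∑ a, |ρ h0 s a * ((R h0 s a + ∑ s', P h0 s a s' * gval H P R ρ k s')
            - (R' h0 s a + ∑ s', P' h0 s a s' * gval H P' R' ρ k s'))| :=
          Finset.abs_sum_le_sum_abs _ _
      _ ≤ ∑ a, ρ h0 s a * (dR h0 + H * dP h0 + B) := by
          refine Finset.sum_le_sum fun a _ => ?_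
          rw [abs_mul, abs_of_nonneg (hρ0 _ _ _)]
          exact mul_le_mul_of_nonneg_left (key a) (hρ0 _ _ _)
      _ = dR h0 + H * dP h0 + B := by rw [← Finset.sum_mul, hρ1, one_mul]

end auxiliary

lemma deviate_nonneg {m : ℕ} {S : Type*} {A : Fin m → Type*} [∀ i, Fintype (A i)]
    (π : ℕ → S → ((j : Fin m) → A j) → ℝ) (i : Fin m) (σ : ℕ → S → A i → ℝ)
    (hπ0 : ∀ h s a, 0 ≤ π h s a) (hσ0 : ∀ h s a, 0 ≤ σ h s a) :
    ∀ h s a, 0 ≤ deviate π i σ h s a := fun _ _ _ =>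
  mul_nonneg (hσ0 _ _ _) (Finset.sum_nonneg fun _ _ => hπ0 _ _ _)

lemma deviate_sum {m : ℕ} {S : Type*} {A : Fin m → Type*} [∀ i, Fintype (A i)]
    (π : ℕ → S → ((j : Fin m) → A j) → ℝ) (i : Fin m) (σ : ℕ → S → A i → ℝ)
    (hπ1 : ∀ h s, ∑ a, π h s a = 1) (hσ1 : ∀ h s, ∑ a, σ h s a = 1) :
    ∀ h s, ∑ a, deviate π i σ h s a = 1 := by
  intro h s
  have h1 : ∑ a, deviate π i σ h s a
      = ∑ p : ((∀ j, A j) × A i), σ h s (p.1 i) * π h s (Function.update p.1 i p.2) := by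
    rw [Fintype.sum_prod_type]
    simp [deviate, Finset.mul_sum]
  have h2 : ∑ p : ((∀ j, A j) × A i), σ h s (p.1 i) * π h s (Function.update p.1 i p.2)
      = ∑ p : ((∀ j, A j) × A i), σ h s p.2 * π h s p.1 := by
    refine Fintype.sum_equiv
      ⟨fun p => (Function.update p.1 i p.2, p.1 i),
       fun p => (Function.update p.1 i p.2, p.1 i),
       fun p => Prod.ext (by simp [Function.update_idem]) (by simp),
       fun p => Prod.ext (by simp [Function.update_idem]) (by simp)⟩ _ _ fun p => rfl
  have h3 : ∀ x : (∀ j, A j), ∑ y : A i, σ h s y * π h s x = π h s x := fun x => by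
    rw [← Finset.sum_mul, hσ1, one_mul]
  rw [h1, h2, Fintype.sum_prod_type]
  simp only [h3]
  exact hπ1 h s

/-- (Value content of Lemma B.2 / B.3 for Markov games: CCE gap under model change.) If the
joint Markov policy π is an ε-CCE of the Markov game M = (P, R), i.e. no player i can gain
more than ε by deviating to any Markov policy σ, then in any other game M' = (P', R') on the
same spaces, π is an (ε + 2H‖M − M'‖₁)-CCE, where
‖M − M'‖₁ = Σ_{h=1}^H (max_{s,a} Σ_{s'} |P_h − P'_h| + max_{i,s,a} |R_{h,i} − R'_{h,i}|). -/
theorem stmt_1 (m : ℕ) (hm : 0 < m) {S : Type*} [Fintype S] [Nonempty S]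
    (A : Fin m → Type*) [∀ i, Fintype (A i)] [∀ i, Nonempty (A i)]
    (H : ℕ) (hH : 0 < H) (s₁ : S)
    (P P' : ℕ → S → ((j : Fin m) → A j) → S → ℝ)
    (R R' : ℕ → Fin m → S → ((j : Fin m) → A j) → ℝ)
    (hP0 : ∀ h s a s', 0 ≤ P h s a s') (hP1 : ∀ h s a, ∑ s', P h s a s' = 1)
    (hP'0 : ∀ h s a s', 0 ≤ P' h s a s') (hP'1 : ∀ h s a, ∑ s', P' h s a s' = 1)
    (hR : ∀ h i s a, R h i s a ∈ Set.Icc (0 : ℝ) 1)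
    (hR' : ∀ h i s a, R' h i s a ∈ Set.Icc (0 : ℝ) 1)
    (π : ℕ → S → ((j : Fin m) → A j) → ℝ)
    (hπ0 : ∀ h s a, 0 ≤ π h s a) (hπ1 : ∀ h s, ∑ a, π h s a = 1)
    (ε : ℝ)
    (hCCE : ∀ i, ∀ σ : ℕ → S → A i → ℝ, (∀ h s a, 0 ≤ σ h s a) →
      (∀ h s, ∑ a, σ h s a = 1) →
      gval H P (fun h => R h i) (deviate π i σ) H s₁
        - gval H P (fun h => R h i) π H s₁ ≤ ε) :
    ∀ i, ∀ σ : ℕ → S → A i → ℝ, (∀ h s a, 0 ≤ σ h s a) →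
      (∀ h s, ∑ a, σ h s a = 1) →
      gval H P' (fun h => R' h i) (deviate π i σ) H s₁
        - gval H P' (fun h => R' h i) π H s₁
        ≤ ε + 2 * (H : ℝ) * ∑ h ∈ Finset.Icc 1 H,
          ((Finset.univ : Finset (S × ((j : Fin m) → A j))).sup' Finset.univ_nonempty
              (fun p => ∑ s', |P h p.1 p.2 s' - P' h p.1 p.2 s'|) +
            (Finset.univ : Finset (Fin m × S × ((j : Fin m) → A j))).sup'
              (by have : Nonempty (Fin m) := ⟨⟨0, hm⟩⟩
                  exact Finset.univ_nonempty)
              (fun p => |R h p.1 p.2.1 p.2.2 - R' h p.1 p.2.1 p.2.2|)) := by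
  intro i σ hσ0 hσ1
  haveI : Nonempty (Fin m) := ⟨⟨0, hm⟩⟩
  set dPf : ℕ → ℝ := fun h =>
    (Finset.univ : Finset (S × ((j : Fin m) → A j))).sup' Finset.univ_nonempty
      (fun p => ∑ s', |P h p.1 p.2 s' - P' h p.1 p.2 s'|) with hdPf
  set dRf : ℕ → ℝ := fun h =>
    (Finset.univ : Finset (Fin m × S × ((j : Fin m) → A j))).sup' Finset.univ_nonempty
      (fun p => |R h p.1 p.2.1 p.2.2 - R' h p.1 p.2.1 p.2.2|) with hdRf
  have hdP : ∀ h (s : S) (a : (j : Fin m) → A j),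
      ∑ s', |P h s a s' - P' h s a s'| ≤ dPf h := fun h s a =>
    Finset.le_sup' (fun p : S × ((j : Fin m) → A j) =>
      ∑ s', |P h p.1 p.2 s' - P' h p.1 p.2 s'|) (Finset.mem_univ (s, a))
  have hdR : ∀ h (s : S) (a : (j : Fin m) → A j),
      |R h i s a - R' h i s a| ≤ dRf h := fun h s a =>
    Finset.le_sup' (fun p : Fin m × S × ((j : Fin m) → A j) =>
      |R h p.1 p.2.1 p.2.2 - R' h p.1 p.2.1 p.2.2|) (Finset.mem_univ (i, s, a))
  have hdP0 : ∀ h, 0 ≤ dPf h := fun h =>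
    le_trans (Finset.sum_nonneg fun _ _ => abs_nonneg _)
      (hdP h (Classical.arbitrary _) (Classical.arbitrary _))
  have hdR0 : ∀ h, 0 ≤ dRf h := fun h =>
    le_trans (abs_nonneg _) (hdR h (Classical.arbitrary _) (Classical.arbitrary _))
  have hdev0 := deviate_nonneg π i σ hπ0 hσ0
  have hdev1 := deviate_sum π i σ hπ1 hσ1
  have d1 := gval_diff H P P' (fun h => R h i) (fun h => R' h i) π hP0 hP1 hP'0 hP'1
    (fun h s a => hR h i s a) hπ0 hπ1 dPf dRf hdP hdR H le_rfl s₁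
  have d2 := gval_diff H P P' (fun h => R h i) (fun h => R' h i) (deviate π i σ)
    hP0 hP1 hP'0 hP'1 (fun h s a => hR h i s a) hdev0 hdev1 dPf dRf hdP hdR H le_rfl s₁
  have d3 := hCCE i σ hσ0 hσ1
  rw [Nat.sub_self, Nat.zero_add] at d1 d2
  set B := ∑ h ∈ Finset.Icc 1 H, (dRf h + (H : ℝ) * dPf h) with hBdef
  have hBle : B ≤ (H : ℝ) * ∑ h ∈ Finset.Icc 1 H, (dPf h + dRf h) := by
    rw [hBdef, Finset.mul_sum]
    refine Finset.sum_le_sum fun h _ => ?_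
    have hH1 : (1 : ℝ) ≤ (H : ℝ) := by exact_mod_cast hH
    nlinarith [hdR0 h, hdP0 h]
  have e1 := abs_sub_le_iff.mp d1
  have e2 := abs_sub_le_iff.mp d2
  calc gval H P' (fun h => R' h i) (deviate π i σ) H s₁
        - gval H P' (fun h => R' h i) π H s₁
      ≤ ε + 2 * B := by linarith [e1.1, e1.2, e2.1, e2.2]
    _ ≤ ε + 2 * ((H : ℝ) * ∑ h ∈ Finset.Icc 1 H, (dPf h + dRf h)) := by linarith
    _ = ε + 2 * (H : ℝ) * ∑ h ∈ Finset.Icc 1 H, (dPf h + dRf h) := by ring
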